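/- Let d ≥ 1 and m ≥ 2 be integers. For any K ∈ ℕ, any parameters v_k ∈ ℝ, w_k ∈ ℝ^d, b_k ∈ ℝ (k = 1, …, K), and any polynomial c : ℝ^d → ℝ of total degree strictly less than m, there exist parameters v'_k ∈ ℝ, w'_k ∈ ℝ^d, b'_k ∈ ℝ (k = 1, …, K) and a polynomial c' : ℝ^d → ℝ of total degree strictly less than m such that: (i) Σ_{k=1}^K v'_k ρ_m(⟨w'_k, x⟩ − b'_k) + c'(x) = Σ_{k=1}^K v_k ρ_m(⟨w_k, x⟩ − b_k) + c(x) for all x ∈ ℝ^d; (ii) |v'_k| = ‖w'_k‖₂^{m−1} for every k; and (iii) Σ_{k=1}^K |v'_k| ‖w'_k‖₂^{m−1} = Σ_{k=1}^K |v_k| ‖w_k‖₂^{m−1}, so that in particular (1/2) Σ_{k=1}^K (|v'_k|² + ‖w'_k‖₂^{2m−2}) = Σ_{k=1}^K |v_k| ‖w_k‖₂^{m−1}. -/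

import Mathlib

open scoped InnerProductSpace BigOperators

/-- The `m`-th order truncated power function `ρ_m(t) = (max 0 t)^(m-1) / (m-1)!`. -/
noncomputable def truncPow (m : ℕ) (t : ℝ) : ℝ :=
  (max 0 t) ^ (m - 1) / (Nat.factorial (m - 1))

theorem network_rebalancing (d m K : ℕ) (hd : 1 ≤ d) (hm : 2 ≤ m)
    (v : Fin K → ℝ) (w : Fin K → EuclideanSpace ℝ (Fin d)) (b : Fin K → ℝ)
    (c : MvPolynomial (Fin d) ℝ) (hc : c.totalDegree < m) :
    ∃ (v' : Fin K → ℝ) (w' : Fin K → EuclideanSpace ℝ (Fin d)) (b' : Fin K → ℝ)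
      (c' : MvPolynomial (Fin d) ℝ),
      c'.totalDegree < m ∧
      (∀ x : EuclideanSpace ℝ (Fin d),
        (∑ k, v' k * truncPow m (⟪w' k, x⟫_ℝ - b' k)) + MvPolynomial.eval x c' =
          (∑ k, v k * truncPow m (⟪w k, x⟫_ℝ - b k)) + MvPolynomial.eval x c) ∧
      (∀ k, |v' k| = ‖w' k‖ ^ (m - 1)) ∧
      (∑ k, |v' k| * ‖w' k‖ ^ (m - 1)) = (∑ k, |v k| * ‖w k‖ ^ (m - 1)) ∧
      (1 / 2 : ℝ) * (∑ k, (|v' k| ^ 2 + ‖w' k‖ ^ (2 * m - 2)))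
        = ∑ k, |v k| * ‖w k‖ ^ (m - 1) := by
  classical
  set n := m - 1 with hn
  have hn1 : 1 ≤ n := by omega
  have hnz : n ≠ 0 := by omega
  -- homogeneity of truncPow
  have hhom : ∀ (r t : ℝ), 0 ≤ r → truncPow m (r * t) = r ^ n * truncPow m t := by
    intro r t hr
    unfold truncPow
    rw [show max 0 (r * t) = r * max 0 t by
      rw [mul_max_of_nonneg _ _ hr, mul_zero]]
    rw [mul_pow]
    ring
  set cnd : Fin K → Prop := fun k => v k ≠ 0 ∧ w k ≠ 0 with hcnd
  set r : Fin K → ℝ := fun k => (|v k| / ‖w k‖ ^ n) ^ ((2 * n : ℝ))⁻¹ with hrdef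
  have hX : ∀ k, cnd k → 0 < |v k| / ‖w k‖ ^ n := by
    intro k hk
    exact div_pos (abs_pos.2 hk.1) (pow_pos (norm_pos_iff.2 hk.2) n)
  have hrpos : ∀ k, cnd k → 0 < r k := by
    intro k hk
    exact Real.rpow_pos_of_pos (hX k hk) _
  have hs2 : ∀ k, cnd k → (r k) ^ n * (r k) ^ n = |v k| / ‖w k‖ ^ n := by
    intro k hk
    have h1 : (r k) ^ (2 * n) = |v k| / ‖w k‖ ^ n := by
      rw [hrdef]
      rw [← Real.rpow_natCast ((|v k| / ‖w k‖ ^ n) ^ ((2 * n : ℝ))⁻¹) (2 * n),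
        ← Real.rpow_mul (hX k hk).le]
      rw [show ((2 * n : ℝ))⁻¹ * ((2 * n : ℕ) : ℝ) = 1 by
        push_cast
        field_simp]
      exact Real.rpow_one _
    rw [← h1, ← pow_add]
    ring_nf
  set v' : Fin K → ℝ := fun k => if cnd k then v k / (r k) ^ n else 0 with hv'
  set w' : Fin K → EuclideanSpace ℝ (Fin d) := fun k => if cnd k then (r k) • w k else 0
    with hw'
  set b' : Fin K → ℝ := fun k => if cnd k then r k * b k else 0 with hb'
  set s : ℝ := ∑ k, if cnd k then 0 else v k * truncPow m (-(b k)) with hs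
  refine ⟨v', w', b', c + MvPolynomial.C s, ?_, ?_, ?_, ?_, ?_⟩
  · -- total degree
    calc (c + MvPolynomial.C s).totalDegree
        ≤ max c.totalDegree (MvPolynomial.C s).totalDegree :=
          MvPolynomial.totalDegree_add _ _
      _ < m := by
          rw [MvPolynomial.totalDegree_C]
          simp [hc]
  · -- pointwise equality
    intro x
    have hterm : ∀ k, v' k * truncPow m (⟪w' k, x⟫_ℝ - b' k)
        + (if cnd k then 0 else v k * truncPow m (-(b k)))
        = v k * truncPow m (⟪w k, x⟫_ℝ - b k) := by
      intro k
      by_cases hk : cnd k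
      · simp only [hv', hw', hb', if_pos hk, add_zero]
        rw [real_inner_smul_left,
          show r k * ⟪w k, x⟫_ℝ - r k * b k = r k * (⟪w k, x⟫_ℝ - b k) by ring,
          hhom _ _ (hrpos k hk).le]
        have hrn : (r k) ^ n ≠ 0 := pow_ne_zero _ (hrpos k hk).ne'
        field_simp
      · simp only [hv', hw', hb', if_neg hk]
        by_cases hv0 : v k = 0
        · simp [hv0]
        · have hw0 : w k = 0 := by
            by_contra hw0
            exact hk ⟨hv0, hw0⟩
          simp [hw0, inner_zero_left, zero_sub]
    rw [map_add, MvPolynomial.eval_C]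
    calc (∑ k, v' k * truncPow m (⟪w' k, x⟫_ℝ - b' k)) + (MvPolynomial.eval x c + s)
        = (∑ k, (v' k * truncPow m (⟪w' k, x⟫_ℝ - b' k)
            + (if cnd k then 0 else v k * truncPow m (-(b k)))))
          + MvPolynomial.eval x c := by
          rw [Finset.sum_add_distrib, hs]; ring
      _ = (∑ k, v k * truncPow m (⟪w k, x⟫_ℝ - b k)) + MvPolynomial.eval x c := by
          rw [Finset.sum_congr rfl fun k _ => hterm k]
  · -- balanced
    intro k
    by_cases hk : cnd k
    · simp only [hv', hw', if_pos hk]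
      have hrp := hrpos k hk
      have hrn : (0:ℝ) < (r k) ^ n := pow_pos hrp n
      have hwn : (0:ℝ) < ‖w k‖ ^ n := pow_pos (norm_pos_iff.2 hk.2) n
      rw [abs_div, abs_of_pos hrn, norm_smul, Real.norm_eq_abs, abs_of_pos hrp, mul_pow]
      rw [div_eq_iff hrn.ne']
      have h2 := hs2 k hk
      rw [eq_div_iff hwn.ne'] at h2
      linear_combination -h2
    · simp [hv', hw', if_neg hk, zero_pow hnz]
  · -- sum preserved
    refine Finset.sum_congr rfl fun k _ => ?_
    by_cases hk : cnd k
    · simp only [hv', hw', if_pos hk]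
      have hrp := hrpos k hk
      have hrn : (0:ℝ) < (r k) ^ n := pow_pos hrp n
      rw [abs_div, abs_of_pos hrn, norm_smul, Real.norm_eq_abs, abs_of_pos hrp, mul_pow]
      field_simp
    · simp only [hv', hw', if_neg hk, abs_zero, norm_zero, zero_pow hnz, zero_mul]
      by_cases hv0 : v k = 0
      · simp [hv0]
      · have hw0 : w k = 0 := by
          by_contra hw0
          exact hk ⟨hv0, hw0⟩
        simp [hw0, zero_pow hnz]
  · -- energy identity
    have hbal : ∀ k, |v' k| = ‖w' k‖ ^ n := by
      intro k
      by_cases hk : cnd k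
      · simp only [hv', hw', if_pos hk]
        have hrp := hrpos k hk
        have hrn : (0:ℝ) < (r k) ^ n := pow_pos hrp n
        have hwn : (0:ℝ) < ‖w k‖ ^ n := pow_pos (norm_pos_iff.2 hk.2) n
        rw [abs_div, abs_of_pos hrn, norm_smul, Real.norm_eq_abs, abs_of_pos hrp, mul_pow]
        rw [div_eq_iff hrn.ne']
        have h2 := hs2 k hk
        rw [eq_div_iff hwn.ne'] at h2
        linear_combination -h2
      · simp [hv', hw', if_neg hk, zero_pow hnz]
    have hsum : (∑ k, |v' k| * ‖w' k‖ ^ n) = ∑ k, |v k| * ‖w k‖ ^ n := by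
      refine Finset.sum_congr rfl fun k _ => ?_
      by_cases hk : cnd k
      · simp only [hv', hw', if_pos hk]
        have hrp := hrpos k hk
        have hrn : (0:ℝ) < (r k) ^ n := pow_pos hrp n
        rw [abs_div, abs_of_pos hrn, norm_smul, Real.norm_eq_abs, abs_of_pos hrp, mul_pow]
        field_simp
      · simp only [hv', hw', if_neg hk, abs_zero, norm_zero, zero_pow hnz, zero_mul]
        by_cases hv0 : v k = 0
        · simp [hv0]
        · have hw0 : w k = 0 := by
            by_contra hw0
            exact hk ⟨hv0, hw0⟩
          simp [hw0, zero_pow hnz]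
    have h2m : 2 * m - 2 = n * 2 := by omega
    calc (1 / 2 : ℝ) * (∑ k, (|v' k| ^ 2 + ‖w' k‖ ^ (2 * m - 2)))
        = (1 / 2 : ℝ) * (∑ k, 2 * (|v' k| * ‖w' k‖ ^ n)) := by
          congr 1
          refine Finset.sum_congr rfl fun k _ => ?_
          rw [h2m, pow_mul, ← hbal k, hbal k]
          ring
      _ = ∑ k, |v' k| * ‖w' k‖ ^ n := by
          rw [← Finset.mul_sum]
          ring
      _ = ∑ k, |v k| * ‖w k‖ ^ n := hsum
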